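/- Fix ω ∈ (0,2), m_s > 0, α_s > 0, and γ ∈ (ω² - 4, ω²). Let ζ ∈ (0, π) be defined by 2 cos ζ - 2 + ω² = γ. Then the function ψ_γ : ℤ≤0 → ℝ given by ψ_γ(y) = ( (m_s ω² - α_s γ - 1) sin(ζ y) + sin(ζ(y+1)) ) / sin ζ satisfies: (i) ψ_γ(y+1) + ψ_γ(y-1) - 2ψ_γ(y) + ω² ψ_γ(y) = γ ψ_γ(y) for all y < 0; (ii) ψ_γ(-1) - ψ_γ(0) + m_s ω² ψ_γ(0) = α_s γ ψ_γ(0); (iii) ψ_γ(0) = 1; and (iv) ψ_γ is bounded on ℤ≤0. -/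
import Mathlib


open Real

theorem stmt3 (ω ms αs γ ζ : ℝ) (hω : ω ∈ Set.Ioo (0:ℝ) 2)
    (hms : 0 < ms) (hαs : 0 < αs) (hγ : γ ∈ Set.Ioo (ω ^ 2 - 4) (ω ^ 2))
    (hζ : ζ ∈ Set.Ioo (0:ℝ) Real.pi) (hζγ : 2 * Real.cos ζ - 2 + ω ^ 2 = γ)
    (ψ : ℤ → ℝ)
    (hψ : ∀ y : ℤ, ψ y =
      ((ms * ω ^ 2 - αs * γ - 1) * Real.sin (ζ * (y : ℝ)) + Real.sin (ζ * ((y : ℝ) + 1)))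
        / Real.sin ζ) :
    (∀ y : ℤ, y < 0 → ψ (y + 1) + ψ (y - 1) - 2 * ψ y + ω ^ 2 * ψ y = γ * ψ y) ∧
    (ψ (-1) - ψ 0 + ms * ω ^ 2 * ψ 0 = αs * γ * ψ 0) ∧
    (ψ 0 = 1) ∧
    (∃ C : ℝ, ∀ y : ℤ, y ≤ 0 → |ψ y| ≤ C) := by
  obtain ⟨hζ0, hζπ⟩ := hζ
  have hs : (0:ℝ) < Real.sin ζ := Real.sin_pos_of_pos_of_lt_pi hζ0 hζπ
  have hs' : Real.sin ζ ≠ 0 := ne_of_gt hs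
  have h0 : ψ 0 = 1 := by
    rw [hψ 0]; push_cast; simp [hs']
  refine ⟨?_, ?_, h0, ?_⟩
  · intro y hy
    have h1 := hψ (y + 1); have h2 := hψ (y - 1); have h3 := hψ y
    push_cast at h1 h2 h3
    rw [h1, h2, h3]
    rw [show ζ * ((y:ℝ) + 1) = ζ * y + ζ by ring,
        show ζ * ((y:ℝ) + 1 + 1) = (ζ * y + ζ) + ζ by ring,
        show ζ * ((y:ℝ) - 1) = ζ * y - ζ by ring,
        show ζ * ((y:ℝ) - 1 + 1) = ζ * y by ring]
    subst hζγ
    simp only [Real.sin_add, Real.sin_sub, Real.cos_add, Real.cos_sub]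
    field_simp
    linear_combination (-Real.sin (ζ * (y:ℝ))) * Real.sin_sq_add_cos_sq ζ
  · have hm1 := hψ (-1)
    push_cast at hm1
    rw [h0, hm1]
    norm_num
    field_simp
    ring
  · refine ⟨(|ms * ω ^ 2 - αs * γ - 1| + 1) / Real.sin ζ, fun y _ => ?_⟩
    rw [hψ y, abs_div, abs_of_pos hs]
    gcongr
    calc |(ms * ω ^ 2 - αs * γ - 1) * Real.sin (ζ * (y : ℝ)) + Real.sin (ζ * ((y : ℝ) + 1))|
        ≤ |(ms * ω ^ 2 - αs * γ - 1) * Real.sin (ζ * (y : ℝ))| + |Real.sin (ζ * ((y : ℝ) + 1))| :=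
          abs_add_le _ _
      _ ≤ |ms * ω ^ 2 - αs * γ - 1| * 1 + 1 := by
          rw [abs_mul]
          gcongr
          · exact Real.abs_sin_le_one _
          · exact Real.abs_sin_le_one _
      _ = |ms * ω ^ 2 - αs * γ - 1| + 1 := by ring
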